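/- If n = p^m is a power of an odd prime p (with m ≥ 1), then the chromatic number of the 2-derangement graph satisfies χ(Γ_{2,n}) = C(n,2) = n(n−1)/2. -/

import Mathlib

open Finset Equiv

section Aux

lemma exists_half_transversal {α : Type*} [DecidableEq α] (f : α → α) :
    ∀ s : Finset α, (∀ a ∈ s, f a ∈ s) → (∀ a ∈ s, f (f a) = a) → (∀ a ∈ s, f a ≠ a) →
    ∃ A ⊆ s, 2 * A.card = s.card ∧ ∀ a ∈ A, f a ∉ A := by
  intro s
  induction s using Finset.strongInduction with
  | _ s ih =>
    intro hmem hinv hfix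
    rcases s.eq_empty_or_nonempty with rfl | ⟨a, ha⟩
    · exact ⟨∅, by simp⟩
    · set t := (s.erase a).erase (f a) with ht
      have hfa : f a ∈ s := hmem a ha
      have hfane : f a ≠ a := hfix a ha
      have hts : t ⊆ s := (erase_subset _ _).trans (erase_subset _ _)
      have htss : t ⊂ s := lt_of_le_of_lt (erase_subset _ _) (erase_ssubset ha)
      have htmem : ∀ b ∈ t, f b ∈ t := by
        intro b hb
        have hbs : b ∈ s := hts hb
        have hbfa : b ≠ f a := (mem_erase.mp hb).1
        have hba : b ≠ a := (mem_erase.mp (mem_erase.mp hb).2).1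
        refine mem_erase.mpr ⟨?_, mem_erase.mpr ⟨?_, hmem b hbs⟩⟩
        · intro h; exact hba (by rw [← hinv b hbs, h, hinv a ha])
        · intro h; exact hbfa (by rw [← hinv b hbs, h])
      obtain ⟨A, hAt, hAcard, hAf⟩ := ih t htss htmem
        (fun b hb => hinv b (hts hb)) (fun b hb => hfix b (hts hb))
      refine ⟨insert a A, ?_, ?_, ?_⟩
      · intro x hx
        rcases mem_insert.mp hx with rfl | hx
        · exact ha
        · exact hts (hAt hx)
      · have hanotA : a ∉ A := fun h => (mem_erase.mp (mem_erase.mp (hAt h)).2).1 rfl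
        have : s.card = t.card + 2 := by
          rw [ht, card_erase_of_mem (mem_erase.mpr ⟨hfane, hfa⟩), card_erase_of_mem ha]
          have : 2 ≤ s.card := by
            have := one_lt_card.mpr ⟨a, ha, f a, hfa, hfane.symm⟩
            omega
          omega
        rw [card_insert_of_notMem hanotA, this]
        omega
      · intro x hx
        rcases mem_insert.mp hx with rfl | hx
        · intro h
          rcases mem_insert.mp h with h' | h'
          · exact hfane h'
          · exact (mem_erase.mp (hAt h')).1 rfl
        · intro h
          rcases mem_insert.mp h with h' | h'
          · exact absurd (by rw [← hinv x (hts (hAt hx)), h'] : x = f a)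
              (mem_erase.mp (hAt hx)).1
          · exact hAf x hx h'

variable {F : Type*} [Field F] [DecidableEq F]

def affPerm (u : Fˣ) (b : F) : Equiv.Perm F :=
  (Equiv.mulLeft₀ (u : F) u.ne_zero).trans (Equiv.addRight b)

omit [DecidableEq F] in
@[simp] lemma affPerm_apply (u : Fˣ) (b : F) (x : F) : affPerm u b x = u * x + b := rfl

omit [DecidableEq F] in
lemma affPerm_injective :
    Function.Injective (fun ub : Fˣ × F => (affPerm ub.1 ub.2 : Equiv.Perm F)) := by
  rintro ⟨u₁, b₁⟩ ⟨u₂, b₂⟩ h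
  have h0 := congrArg (fun σ : Equiv.Perm F => σ 0) h
  have h1 := congrArg (fun σ : Equiv.Perm F => σ 1) h
  simp only [affPerm_apply, mul_zero, zero_add, mul_one] at h0 h1
  have hu : (u₁ : F) = u₂ := by rw [h0] at h1; exact add_right_cancel h1
  exact Prod.ext (Units.ext hu) h0

lemma affine_not_fix_pair {a b : F} (ha : a ≠ -1) (hab : a ≠ 1 ∨ b ≠ 0)
    (ρ : Equiv.Perm F) (hρ : ∀ x, ρ x = a * x + b) :
    ∀ Y : Finset F, Y.card = 2 → Y.image ρ ≠ Y := by
  intro Y hY hfix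
  obtain ⟨x, y, hxy, rfl⟩ := Finset.card_eq_two.mp hY
  have himg : ({x, y} : Finset F).image ρ = {ρ x, ρ y} := by
    simp [Finset.image_insert]
  rw [himg] at hfix
  have hx : ρ x ∈ ({x, y} : Finset F) := by rw [← hfix]; simp
  have hy : ρ y ∈ ({x, y} : Finset F) := by rw [← hfix]; simp
  simp only [Finset.mem_insert, Finset.mem_singleton] at hx hy
  rw [hρ x] at hx; rw [hρ y] at hy
  have hsub : x - y ≠ 0 := sub_ne_zero.mpr hxy
  rcases hx with hx | hx <;> rcases hy with hy | hy
  · exact hxy (ρ.injective (by rw [hρ x, hρ y, hx, hy]))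
  · have h1 : (a - 1) * (x - y) = 0 := by linear_combination hx - hy
    rcases mul_eq_zero.mp h1 with h | h
    · have ha1 : a = 1 := by linear_combination h
      have hb0 : b = 0 := by linear_combination hx - x * ha1
      rcases hab with h' | h'
      exacts [h' ha1, h' hb0]
    · exact hsub h
  · have h1 : (a + 1) * (x - y) = 0 := by linear_combination hx - hy
    rcases mul_eq_zero.mp h1 with h | h
    · exact ha (by linear_combination h)
    · exact hsub h
  · exact hxy (ρ.injective (by rw [hρ x, hρ y, hx, hy]))

omit [DecidableEq F] in
lemma affPerm_mul_inv_apply (u₁ u₂ : Fˣ) (b₁ b₂ : F) (x : F) :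
    (affPerm u₁ b₁ * (affPerm u₂ b₂)⁻¹) x
      = ((u₁ * u₂⁻¹ : Fˣ) : F) * x + (b₁ - ((u₁ * u₂⁻¹ : Fˣ) : F) * b₂) := by
  simp [affPerm, Equiv.Perm.mul_apply, Equiv.Perm.inv_def, mul_sub]
  ring

lemma permCongr_mul_inv {α β : Type*} (e : α ≃ β) (σ τ : Equiv.Perm α) :
    (e.permCongr σ) * (e.permCongr τ)⁻¹ = e.permCongr (σ * τ⁻¹) := by
  ext x
  simp [Equiv.permCongr_def, Equiv.Perm.mul_apply, Equiv.Perm.inv_def]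

end Aux

def IsKDerangement (n k : ℕ) (σ : Equiv.Perm (Fin n)) : Prop :=
  ∀ X : Finset (Fin n), X.card = k → X.image σ ≠ X

lemma IsKDerangement.inv {n k : ℕ} {σ : Equiv.Perm (Fin n)}
    (h : IsKDerangement n k σ) : IsKDerangement n k σ⁻¹ := by
  intro X hX hfix
  refine h X hX ?_
  nth_rewrite 1 [← hfix]
  rw [Finset.image_image]
  simp [Function.comp_def]

def derangementGraph (n k : ℕ) : SimpleGraph (Equiv.Perm (Fin n)) where
  Adj σ τ := σ ≠ τ ∧ IsKDerangement n k (σ * τ⁻¹)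
  symm := ⟨by
    rintro σ τ ⟨hne, h⟩
    exact ⟨hne.symm, by simpa [mul_inv_rev] using h.inv⟩⟩
  loopless := ⟨by rintro σ ⟨hne, -⟩; exact hne rfl⟩

noncomputable def numKDerangements (n k : ℕ) : ℕ :=
  Nat.card {σ : Equiv.Perm (Fin n) // IsKDerangement n k σ}

noncomputable def indepNum {V : Type*} (G : SimpleGraph V) : ℕ :=
  sSup {m | ∃ s : Finset V, (∀ a ∈ s, ∀ b ∈ s, a ≠ b → ¬ G.Adj a b) ∧ s.card = m}

lemma isKDerangement_of_permCongr {n : ℕ} {F : Type*} [DecidableEq F] (e : F ≃ Fin n)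
    (ρ : Equiv.Perm F) (h : ∀ Y : Finset F, Y.card = 2 → Y.image ρ ≠ Y) :
    IsKDerangement n 2 (e.permCongr ρ) := by
  intro X hX hfix
  apply h (X.image e.symm)
    (by rw [Finset.card_image_of_injective _ e.symm.injective, hX])
  calc (X.image e.symm).image ρ
      = (X.image (e.permCongr ρ)).image e.symm := by
        rw [Finset.image_image, Finset.image_image]
        congr 1; funext x; simp [Equiv.permCongr_apply]
    _ = X.image e.symm := by rw [hfix]

/-- If `n = p^m` is a power of an odd prime, then the chromatic number of the
`2`-derangement graph equals `C(n,2) = n(n-1)/2`. -/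
theorem chromaticNumber_derangementGraph_two (n p m : ℕ) (hp : p.Prime) (hodd : Odd p)
    (hm : 1 ≤ m) (hn : n = p ^ m) :
    (derangementGraph n 2).chromaticNumber = (n.choose 2 : ℕ∞) ∧
      (derangementGraph n 2).chromaticNumber = ((n * (n - 1) / 2 : ℕ) : ℕ∞) := by
  classical
  haveI : Fact p.Prime := ⟨hp⟩
  have hp3 : 3 ≤ p := by
    have h2 := hp.two_le
    have hne2 : p ≠ 2 := by
      rintro rfl
      exact (by norm_num : ¬ Odd 2) hodd
    omega
  have hn3 : 3 ≤ n := by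
    calc 3 ≤ p := hp3
    _ ≤ p ^ m := Nat.le_self_pow (by omega) p
    _ = n := hn.symm
  set F := GaloisField p m with hF
  haveI : Fintype F := Fintype.ofFinite F
  have hcardF : Fintype.card F = n := by
    rw [← Nat.card_eq_fintype_card, GaloisField.card p m (by omega), hn]
  let e : F ≃ Fin n := Fintype.equivFinOfCardEq hcardF
  -- characteristic facts
  have h2 : (2 : F) ≠ 0 := by
    haveI : CharP F p := inferInstanceAs (CharP (GaloisField p m) p)
    have hpd : ¬ (p : ℕ) ∣ 2 := by
      intro hd
      have := Nat.le_of_dvd (by norm_num) hd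
      omega
    intro h
    exact hpd ((CharP.cast_eq_zero_iff F p 2).mp (by exact_mod_cast h))
  -- transversal of ±1 classes in Fˣ
  have hneg : ∀ u : Fˣ, -u ≠ u := by
    intro u h
    have : (2 : F) * (u : F) = 0 := by
      have := congrArg (fun v : Fˣ => (v : F)) h
      simp only [Units.val_neg] at this
      linear_combination -this
    rcases mul_eq_zero.mp this with h' | h'
    · exact h2 h'
    · exact u.ne_zero h'
  obtain ⟨A, -, hAcard, hAneg⟩ := exists_half_transversal (fun u : Fˣ => -u)
    Finset.univ (fun a _ => Finset.mem_univ _) (fun a _ => neg_neg a)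
    (fun a _ => hneg a)
  have hAcard' : 2 * A.card = n - 1 := by
    rw [hAcard, Finset.card_univ, Fintype.card_units, hcardF]
  -- the clique
  set Φ : Equiv.Perm F → Equiv.Perm (Fin n) := fun ρ => e.permCongr ρ with hΦ
  have hΦinj : Function.Injective Φ := fun a b h => (e.permCongr).injective h
  set g : Fˣ × F → Equiv.Perm (Fin n) := fun ub => Φ (affPerm ub.1 ub.2) with hg
  have hginj : Function.Injective g := hΦinj.comp affPerm_injective
  set s : Finset (Equiv.Perm (Fin n)) := (A ×ˢ Finset.univ).image g with hs
  have hscard : s.card = A.card * n := by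
    rw [hs, Finset.card_image_of_injective _ hginj, Finset.card_product,
      Finset.card_univ, hcardF]
  have hclique : (derangementGraph n 2).IsClique ↑s := by
    rintro σ hσ τ hτ hne
    rw [hs, Finset.coe_image] at hσ hτ
    obtain ⟨⟨u₁, b₁⟩, hm₁, rfl⟩ := hσ
    obtain ⟨⟨u₂, b₂⟩, hm₂, rfl⟩ := hτ
    have hu₁ : u₁ ∈ A := (Finset.mem_product.mp hm₁).1
    have hu₂ : u₂ ∈ A := (Finset.mem_product.mp hm₂).1
    refine ⟨hne, ?_⟩
    rw [hg]
    simp only []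
    rw [hΦ]
    simp only []
    rw [permCongr_mul_inv]
    apply isKDerangement_of_permCongr
    apply affine_not_fix_pair (a := ((u₁ * u₂⁻¹ : Fˣ) : F))
      (b := b₁ - ((u₁ * u₂⁻¹ : Fˣ) : F) * b₂)
    · -- a ≠ -1
      intro h
      have : u₁ = -u₂ := by
        apply Units.ext
        push_cast at h ⊢
        rw [mul_inv_eq_iff_eq_mul₀ u₂.ne_zero] at h
        linear_combination h
      apply hAneg u₂ hu₂
      rw [← this]
      exact hu₁
    · -- a ≠ 1 ∨ b ≠ 0
      by_cases h1 : ((u₁ * u₂⁻¹ : Fˣ) : F) = 1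
      · right
        have huu : u₁ = u₂ := by
          apply Units.ext
          push_cast at h1
          rw [mul_inv_eq_one₀ u₂.ne_zero] at h1
          exact h1
        have hbb : b₁ ≠ b₂ := by
          intro h
          exact hne (by rw [hg]; simp only []; rw [huu, h])
        rw [h1, one_mul]
        exact sub_ne_zero.mpr hbb
      · exact Or.inl h1
    · exact affPerm_mul_inv_apply u₁ u₂ b₁ b₂
  have hchoose : n.choose 2 = A.card * n := by
    rw [Nat.choose_two_right]
    have h1 : n - 1 = 2 * A.card := hAcard'.symm
    rw [h1]
    calc n * (2 * A.card) / 2 = 2 * (A.card * n) / 2 := by ring_nf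
    _ = A.card * n := Nat.mul_div_cancel_left _ (by norm_num)
  -- lower bound
  have hge : (n.choose 2 : ℕ∞) ≤ (derangementGraph n 2).chromaticNumber := by
    have := hclique.card_le_chromaticNumber
    rwa [hscard, ← hchoose] at this
  -- upper bound : coloring
  obtain ⟨X₀, -, hX₀⟩ := Finset.exists_subset_card_eq
    (show 2 ≤ (Finset.univ : Finset (Fin n)).card by rw [Finset.card_univ]; simp; omega)
  let C : (derangementGraph n 2).Coloring {Y : Finset (Fin n) // Y.card = 2} :=
    SimpleGraph.Coloring.mk
      (fun σ => ⟨X₀.image σ, by rw [Finset.card_image_of_injective _ σ.injective, hX₀]⟩)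
      (by
        rintro σ τ ⟨hne, hder⟩ heq
        have himg : X₀.image σ = X₀.image τ := congrArg Subtype.val heq
        apply hder (X₀.image τ)
          (by rw [Finset.card_image_of_injective _ τ.injective, hX₀])
        rw [Finset.image_image]
        have : ⇑(σ * τ⁻¹) ∘ ⇑τ = ⇑σ := by
          funext x; simp [Equiv.Perm.mul_apply]
        rw [this, himg])
  have hle : (derangementGraph n 2).chromaticNumber ≤ (n.choose 2 : ℕ∞) := by
    have := C.colorable.chromaticNumber_le
    rwa [Fintype.card_finset_len, Fintype.card_fin] at this
  have key : (derangementGraph n 2).chromaticNumber = (n.choose 2 : ℕ∞) :=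
    le_antisymm hle hge
  refine ⟨key, ?_⟩
  rw [key, Nat.choose_two_right]
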